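/- Under the setup of the matrix P = I_n − U Uᵀ − (1/K)Σ_k U_k U_kᵀ with nonzero eigenvalues µ_1,…,µ_{n−r} ∈ [θ,1] summing to n − r − r_avg, the number of eigenvalues not exceeding 1/2 is at most 2·r_avg, and Σ_{i=1}^{n−r} µ_i^{-1} ≤ 2n + 2 r_avg/θ. -/

import Mathlib

open Matrix Finset

/-- The ℓ²→ℓ² operator norm (largest singular value) of a real matrix. -/
noncomputable def opNorm {m n : Type*} [Fintype m] [Fintype n] [DecidableEq n]
    (A : Matrix m n ℝ) : ℝ :=
  ‖LinearMap.toContinuousLinearMap (Matrix.toEuclideanLin A)‖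

lemma quadform_nonneg {n m : ℕ} (A : Matrix (Fin n) (Fin m) ℝ) (v : Fin n → ℝ) :
    0 ≤ v ⬝ᵥ ((A * Aᵀ) *ᵥ v) := by
  rw [← mulVec_mulVec, dotProduct_mulVec, ← mulVec_transpose]
  exact Finset.sum_nonneg fun i _ => mul_self_nonneg _

lemma dot_sum_mulVec {n K : ℕ} (A : Fin K → Matrix (Fin n) (Fin n) ℝ) (v : Fin n → ℝ) :
    v ⬝ᵥ ((∑ k, A k) *ᵥ v) = ∑ k, v ⬝ᵥ (A k *ᵥ v) := by
  have h : (∑ k, A k) *ᵥ v = ∑ k, A k *ᵥ v := by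
    simp only [← Matrix.toLin'_apply, map_sum, LinearMap.coe_sum, Finset.sum_apply]
  rw [h]
  simp only [dotProduct, Finset.sum_apply, Finset.mul_sum]
  exact Finset.sum_comm

lemma dot_self_unit {n : ℕ} (x : EuclideanSpace ℝ (Fin n)) (hx : ‖x‖ = 1) :
    ⇑x ⬝ᵥ ⇑x = 1 := by
  have h2 : (inner ℝ x x : ℝ) = 1 := by rw [real_inner_self_eq_norm_sq, hx]; norm_num
  rw [← h2, PiLp.inner_apply]; simp [dotProduct, mul_comm, sq]

lemma quadform_le_opNorm {n : ℕ} (M : Matrix (Fin n) (Fin n) ℝ) (x : EuclideanSpace ℝ (Fin n))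
    (hx : ‖x‖ = 1) : ⇑x ⬝ᵥ (M *ᵥ ⇑x) ≤ opNorm M := by
  have h1 : ⇑x ⬝ᵥ (M *ᵥ ⇑x) = inner ℝ x (Matrix.toEuclideanLin M x) := by
    rw [PiLp.inner_apply]; simp [dotProduct, Matrix.toEuclideanLin_apply, mul_comm]
  rw [h1]
  calc inner ℝ x (Matrix.toEuclideanLin M x) ≤ ‖x‖ * ‖Matrix.toEuclideanLin M x‖ :=
        real_inner_le_norm _ _
    _ ≤ ‖x‖ * (opNorm M * ‖x‖) := by
        gcongr
        exact (LinearMap.toContinuousLinearMap (Matrix.toEuclideanLin M)).le_opNorm x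
    _ = opNorm M := by rw [hx]; ring

theorem P_eigenvalue_reciprocal_bounds {n r K : ℕ} (hK : 1 ≤ K) (rk : Fin K → ℕ)
    (θ : ℝ) (hθ0 : 0 < θ) (hθ1 : θ ≤ 1)
    (U : Matrix (Fin n) (Fin r) ℝ) (hUo : Uᵀ * U = 1)
    (Uk : ∀ k : Fin K, Matrix (Fin n) (Fin (rk k)) ℝ)
    (hUko : ∀ k, (Uk k)ᵀ * Uk k = 1)
    (hperp : ∀ k, Uᵀ * Uk k = 0)
    (hmis : opNorm (((K : ℝ))⁻¹ • ∑ k, Uk k * (Uk k)ᵀ) ≤ 1 - θ)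
    (P : Matrix (Fin n) (Fin n) ℝ)
    (hP : P = 1 - U * Uᵀ - ((K : ℝ))⁻¹ • ∑ k, Uk k * (Uk k)ᵀ)
    (hHerm : P.IsHermitian) :
    ((Finset.univ.filter
        (fun i => hHerm.eigenvalues i ≠ 0 ∧ hHerm.eigenvalues i ≤ 1 / 2)).card : ℝ)
      ≤ 2 * (((K : ℝ))⁻¹ * ∑ k, (rk k : ℝ)) ∧
    ∑ i ∈ Finset.univ.filter (fun i => hHerm.eigenvalues i ≠ 0),
        (hHerm.eigenvalues i)⁻¹
      ≤ 2 * (n : ℝ) + 2 * (((K : ℝ))⁻¹ * ∑ k, (rk k : ℝ)) / θ := by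
  classical
  set a : ℝ := (K : ℝ)⁻¹ * ∑ k, (rk k : ℝ) with ha
  set M : Matrix (Fin n) (Fin n) ℝ := ((K : ℝ))⁻¹ • ∑ k, Uk k * (Uk k)ᵀ with hM
  set Λ : Fin n → ℝ := hHerm.eigenvalues with hΛ
  have ha0 : 0 ≤ a := by
    apply mul_nonneg (by positivity)
    exact Finset.sum_nonneg fun k _ => Nat.cast_nonneg _
  -- P * U = 0
  have hkU : ∀ k, (Uk k)ᵀ * U = 0 := by
    intro k
    have := congrArg Matrix.transpose (hperp k)
    simpa [Matrix.transpose_mul] using this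
  have hPU : P * U = 0 := by
    rw [hP, hM]
    rw [Matrix.sub_mul, Matrix.sub_mul, Matrix.one_mul, Matrix.mul_assoc, hUo, Matrix.mul_one,
      Matrix.smul_mul, Matrix.sum_mul]
    simp [Matrix.mul_assoc, hkU]
  -- trace
  have htrace : P.trace = (n : ℝ) - (r : ℝ) - a := by
    rw [hP, hM, Matrix.trace_sub, Matrix.trace_sub, Matrix.trace_one, Matrix.trace_smul,
      Matrix.trace_sum, Matrix.trace_mul_comm, hUo, Matrix.trace_one]
    have h1 : ∀ k, (Uk k * (Uk k)ᵀ).trace = (rk k : ℝ) := fun k => by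
      rw [Matrix.trace_mul_comm, hUko, Matrix.trace_one]; simp
    simp [h1, smul_eq_mul, ha]
  have hsum : ∑ i, Λ i = (n : ℝ) - (r : ℝ) - a := by
    rw [← htrace]
    simp [hΛ, hHerm.trace_eq_sum_eigenvalues]
  -- eigenvalue as quadratic form
  have heig : ∀ i, Λ i = ⇑(hHerm.eigenvectorBasis i) ⬝ᵥ (P *ᵥ ⇑(hHerm.eigenvectorBasis i)) := by
    intro i
    rw [hHerm.mulVec_eigenvectorBasis, dotProduct_smul,
      dot_self_unit _ (hHerm.eigenvectorBasis.orthonormal.1 i)]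
    simp [hΛ]
  -- quadratic form decomposition
  have hquad : ∀ v : Fin n → ℝ, v ⬝ᵥ (P *ᵥ v)
      = v ⬝ᵥ v - v ⬝ᵥ ((U * Uᵀ) *ᵥ v) - v ⬝ᵥ (M *ᵥ v) := by
    intro v
    rw [hP]
    simp [Matrix.sub_mulVec, dotProduct_sub]
  have hMnonneg : ∀ v : Fin n → ℝ, 0 ≤ v ⬝ᵥ (M *ᵥ v) := by
    intro v
    rw [hM, Matrix.smul_mulVec, dotProduct_smul, smul_eq_mul]
    apply mul_nonneg (by positivity)
    rw [dot_sum_mulVec]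
    exact Finset.sum_nonneg fun k _ => quadform_nonneg _ _
  -- upper bound
  have hub : ∀ i, Λ i ≤ 1 := by
    intro i
    have h1 := quadform_nonneg U ⇑(hHerm.eigenvectorBasis i)
    have h2 := hMnonneg ⇑(hHerm.eigenvectorBasis i)
    have h3 := dot_self_unit _ (hHerm.eigenvectorBasis.orthonormal.1 i)
    rw [heig i, hquad, h3]
    linarith
  -- lower bound for nonzero eigenvalues
  have hlb : ∀ i, Λ i ≠ 0 → θ ≤ Λ i := by
    intro i hne
    have hUtP : Uᵀ * P = 0 := by
      have h1 := congrArg Matrix.transpose hPU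
      rw [Matrix.transpose_mul] at h1
      rw [← Matrix.conjTranspose_eq_transpose_of_trivial P, hHerm.eq] at h1
      simpa using h1
    have hUv : Uᵀ *ᵥ ⇑(hHerm.eigenvectorBasis i) = 0 := by
      have h1 : Uᵀ *ᵥ (P *ᵥ ⇑(hHerm.eigenvectorBasis i)) = 0 := by
        rw [Matrix.mulVec_mulVec, hUtP, Matrix.zero_mulVec]
      rw [hHerm.mulVec_eigenvectorBasis, Matrix.mulVec_smul] at h1
      rcases smul_eq_zero.mp h1 with h | h
      · exact absurd h hne
      · exact h
    have hUUv : ⇑(hHerm.eigenvectorBasis i) ⬝ᵥ ((U * Uᵀ) *ᵥ ⇑(hHerm.eigenvectorBasis i)) = 0 := by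
      rw [← Matrix.mulVec_mulVec, hUv, Matrix.mulVec_zero, dotProduct_zero]
    have h3 := dot_self_unit _ (hHerm.eigenvectorBasis.orthonormal.1 i)
    have hMle : ⇑(hHerm.eigenvectorBasis i) ⬝ᵥ (M *ᵥ ⇑(hHerm.eigenvectorBasis i)) ≤ 1 - θ :=
      le_trans (quadform_le_opNorm M _ (hHerm.eigenvectorBasis.orthonormal.1 i)) hmis
    rw [heig i, hquad, h3, hUUv]
    linarith
  -- rank bound
  have hUrank : U.rank = r := by
    rw [← Matrix.rank_transpose_mul_self, hUo, Matrix.rank_one]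
    simp
  have hScard : (Finset.univ.filter (fun i => Λ i ≠ 0)).card + r ≤ n := by
    have h1 := Matrix.rank_add_rank_le_card_of_mul_eq_zero hPU
    rw [hUrank, Fintype.card_fin] at h1
    have h2 : P.rank = (Finset.univ.filter (fun i => Λ i ≠ 0)).card := by
      rw [hHerm.rank_eq_card_non_zero_eigs, Fintype.card_subtype]
    omega
  -- arithmetic finale
  set S := Finset.univ.filter (fun i => Λ i ≠ 0) with hS
  set q : Fin n → Prop := fun i => Λ i ≤ 1 / 2 with hq
  have hTS : Finset.univ.filter (fun i => Λ i ≠ 0 ∧ Λ i ≤ 1 / 2) = S.filter q := by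
    rw [hS, Finset.filter_filter]
  set m := (S.filter q).card with hm
  set m' := (S.filter (fun i => ¬ q i)).card with hm'
  have hmm' : m + m' = S.card := Finset.card_filter_add_card_filter_not _
  have hsumS : ∑ i ∈ S, Λ i = (n : ℝ) - (r : ℝ) - a := by
    rw [← hsum, hS]
    exact Finset.sum_filter_ne_zero _
  have hsplit : ∑ i ∈ S.filter q, Λ i + ∑ i ∈ S.filter (fun i => ¬ q i), Λ i = ∑ i ∈ S, Λ i :=
    Finset.sum_filter_add_sum_filter_not _ _ _
  have hb1 : ∑ i ∈ S.filter q, Λ i ≤ (m : ℝ) * (1 / 2) := by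
    rw [hm, ← nsmul_eq_mul]
    apply Finset.sum_le_card_nsmul
    intro i hi
    rw [Finset.mem_filter] at hi
    exact hi.2
  have hb2 : ∑ i ∈ S.filter (fun i => ¬ q i), Λ i ≤ (m' : ℝ) * 1 := by
    rw [hm', ← nsmul_eq_mul]
    exact Finset.sum_le_card_nsmul _ _ _ fun i _ => hub i
  have hcards : (m : ℝ) + (m' : ℝ) + (r : ℝ) ≤ (n : ℝ) := by
    have : m + m' + r ≤ n := by omega
    exact_mod_cast this
  have claim1 : (m : ℝ) ≤ 2 * a := by linarith
  refine ⟨by rw [hTS]; exact claim1, ?_⟩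
  -- reciprocal sum
  have hrec : ∑ i ∈ S, (Λ i)⁻¹
      = ∑ i ∈ S.filter q, (Λ i)⁻¹ + ∑ i ∈ S.filter (fun i => ¬ q i), (Λ i)⁻¹ :=
    (Finset.sum_filter_add_sum_filter_not _ _ _).symm
  have hnz : ∀ i ∈ S, Λ i ≠ 0 := by
    intro i hi
    rw [hS, Finset.mem_filter] at hi
    exact hi.2
  have hr1 : ∑ i ∈ S.filter q, (Λ i)⁻¹ ≤ (m : ℝ) * θ⁻¹ := by
    rw [hm, ← nsmul_eq_mul]
    apply Finset.sum_le_card_nsmul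
    intro i hi
    rw [Finset.mem_filter] at hi
    exact inv_anti₀ hθ0 (hlb i (hnz i hi.1))
  have hr2 : ∑ i ∈ S.filter (fun i => ¬ q i), (Λ i)⁻¹ ≤ (m' : ℝ) * 2 := by
    rw [hm', ← nsmul_eq_mul]
    apply Finset.sum_le_card_nsmul
    intro i hi
    rw [Finset.mem_filter] at hi
    have h12 : (1:ℝ)/2 < Λ i := lt_of_not_ge hi.2
    calc (Λ i)⁻¹ ≤ ((1:ℝ)/2)⁻¹ := inv_anti₀ (by norm_num) h12.le
      _ = 2 := by norm_num
  have hm'n : (m' : ℝ) ≤ (n : ℝ) := by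
    have : m' ≤ n := by omega
    exact_mod_cast this
  have hθinv : (m : ℝ) * θ⁻¹ ≤ 2 * a * θ⁻¹ :=
    mul_le_mul_of_nonneg_right claim1 (by positivity)
  have hgoal : 2 * a / θ = 2 * a * θ⁻¹ := by ring
  rw [hS] at hrec
  rw [hrec, hgoal]
  linarith
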